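/- Assume m ≥ 3 and let {u_1, …, u_{m−1}} be an orthonormal basis of D2. Then for any indices p ≠ j: 0 = (η(η + λ1/2) − 4⟨L(u_j,u_p),L(u_j,u_p)⟩)·L(u_j,u_p) − Σ_{i ≠ p} 4⟨L(u_j,u_i),L(u_j,u_p)⟩·L(u_i,u_j). In particular, if L(u_1,u_2) ≠ 0 and L(u_1,u_i) is orthogonal to L(u_1,u_2) for all i ≠ 2, then ⟨L(u_1,u_2),L(u_1,u_2)⟩ = (1/4)η(η + λ1/2) = τ. -/

import Mathlib

open scoped RealInnerProductSpace
open Module Submodule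

noncomputable section

variable {V : Type*} [NormedAddCommGroup V] [InnerProductSpace ℝ V]

/-- The curvature-type operator built from `ε` and the difference tensor `K`:
`R(X,Y)Z = ε(⟨Y,Z⟩X − ⟨X,Z⟩Y) − K(X,K(Y,Z)) + K(Y,K(X,Z))`. -/
def Rc (ε : ℝ) (K : V →ₗ[ℝ] V →ₗ[ℝ] V) (X Y Z : V) : V :=
  ε • (⟪Y, Z⟫ • X - ⟪X, Z⟫ • Y) - K X (K Y Z) + K Y (K X Z)

/-- The bilinear map `L(v₁,v₂) = K(v₁,v₂) − (λ₁/2)⟨v₁,v₂⟩ e₁`. -/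
def Lop (lam1 : ℝ) (e1 : V) (K : V →ₗ[ℝ] V →ₗ[ℝ] V) (v1 v2 : V) : V :=
  K v1 v2 - (lam1 / 2 * ⟪v1, v2⟫) • e1

/-- The distribution `D₂ = {v : v ⟂ e₁, K(e₁,v) = (λ₁/2)v}`. -/
def D2s (lam1 : ℝ) (e1 : V) (K : V →ₗ[ℝ] V →ₗ[ℝ] V) : Submodule ℝ V :=
  (ℝ ∙ e1)ᗮ ⊓ Module.End.eigenspace (K e1) (lam1 / 2)

/-- The distribution `D₃ = {w : w ⟂ e₁, K(e₁,w) = μw}`. -/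
def D3s (mu : ℝ) (e1 : V) (K : V →ₗ[ℝ] V →ₗ[ℝ] V) : Submodule ℝ V :=
  (ℝ ∙ e1)ᗮ ⊓ Module.End.eigenspace (K e1) mu

/-- The operator `P_v(ṽ) = K(v, L(v,ṽ))`, as a linear endomorphism of `V`. -/
def Pop (lam1 : ℝ) (e1 : V) (K : V →ₗ[ℝ] V →ₗ[ℝ] V) (v : V) : V →ₗ[ℝ] V :=
  (K v) ∘ₗ (K v - (lam1 / 2) •
    ((LinearMap.toSpanSingleton ℝ V e1) ∘ₗ (innerSL ℝ v).toLinearMap))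

/-- The eigenspace `V_v(c)` of `P_v` within the orthogonal complement of `v` in `D₂`. -/
def Vvs (lam1 c : ℝ) (e1 : V) (K : V →ₗ[ℝ] V →ₗ[ℝ] V) (v : V) : Submodule ℝ V :=
  D2s lam1 e1 K ⊓ (ℝ ∙ v)ᗮ ⊓ Module.End.eigenspace (Pop lam1 e1 K v) c

/-- Lemma 4.7: a linear relation among the `L(u_i,u_j)`, and in particular the
computation of `⟨L(u_j,u_p), L(u_j,u_p)⟩ = τ` under an orthogonality assumption. -/
theorem stmt_9 {V : Type*} [NormedAddCommGroup V] [InnerProductSpace ℝ V]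
    (n m : ℕ) (hn : finrank ℝ V = n) (hn2 : 2 ≤ n)
    (ε : ℝ) (hε : ε = 1 ∨ ε = -1)
    (K : V →ₗ[ℝ] V →ₗ[ℝ] V)
    (hKsymm : ∀ X Y : V, K X Y = K Y X)
    (hKcub : ∀ X Y Z : V, ⟪K X Y, Z⟫ = ⟪K X Z, Y⟫)
    (hpar : ∀ X Y Z U : V,
      Rc ε K X Y (K Z U) = K (Rc ε K X Y Z) U + K Z (Rc ε K X Y U))
    (e1 : V) (he1 : ‖e1‖ = 1)
    (lam1 η μ τ : ℝ)
    (hlam1 : lam1 = ⟪K e1 e1, e1⟫) (hlam1pos : 0 < lam1)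
    (hmax : ∀ u : V, ‖u‖ = 1 → ⟪K u u, u⟫ ≤ lam1)
    (hdisc : 0 < lam1 ^ 2 - 4 * ε)
    (hη : η = Real.sqrt (lam1 ^ 2 - 4 * ε) / 2)
    (hμ : μ = (lam1 - Real.sqrt (lam1 ^ 2 - 4 * ε)) / 2)
    (hτ : τ = η * (η + lam1 / 2) / 4)
    (hm2 : 2 ≤ m) (hmn : m ≤ n - 1)
    (hdimD2 : finrank ℝ (D2s lam1 e1 K) = m - 1)
    (hsplit : (ℝ ∙ e1) ⊔ D2s lam1 e1 K ⊔ D3s μ e1 K = ⊤)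
    (hLD3 : ∀ v1 ∈ D2s lam1 e1 K, ∀ v2 ∈ D2s lam1 e1 K,
      Lop lam1 e1 K v1 v2 ∈ D3s μ e1 K)
    (hKD2 : ∀ v ∈ D2s lam1 e1 K, ∀ w ∈ D3s μ e1 K, K v w ∈ D2s lam1 e1 K)
    (hm3 : 3 ≤ m)
    (u : Fin (m - 1) → V) (huD2 : ∀ i, u i ∈ D2s lam1 e1 K)
    (huON : Orthonormal ℝ u)
    (huspan : Submodule.span ℝ (Set.range u) = D2s lam1 e1 K) :
    ∀ j p : Fin (m - 1), p ≠ j →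
      ((0 : V) =
        (η * (η + lam1 / 2) -
            4 * ⟪Lop lam1 e1 K (u j) (u p), Lop lam1 e1 K (u j) (u p)⟫) •
            Lop lam1 e1 K (u j) (u p) -
          ∑ i ∈ Finset.univ.erase p,
            (4 * ⟪Lop lam1 e1 K (u j) (u i), Lop lam1 e1 K (u j) (u p)⟫) •
              Lop lam1 e1 K (u i) (u j)) ∧
      (Lop lam1 e1 K (u j) (u p) ≠ 0 →
        (∀ i, i ≠ p → ⟪Lop lam1 e1 K (u j) (u i), Lop lam1 e1 K (u j) (u p)⟫ = 0) →
        ⟪Lop lam1 e1 K (u j) (u p), Lop lam1 e1 K (u j) (u p)⟫ = τ) := by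
  classical
  -- scalar preliminaries
  have hηpos : 0 < η := by
    rw [hη]; exact div_pos (Real.sqrt_pos.2 hdisc) two_pos
  have hηne : η ≠ 0 := ne_of_gt hηpos
  have hε2 : ε = lam1 ^ 2 / 4 - η ^ 2 := by
    rw [hη, div_pow, Real.sq_sqrt hdisc.le]; ring
  have hμη : μ = lam1 / 2 - η := by rw [hμ, hη]; ring
  have he11 : ⟪e1, e1⟫ = (1 : ℝ) := by
    rw [real_inner_self_eq_norm_sq, he1]; norm_num
  -- membership unfolders
  have hperp2 : ∀ v ∈ D2s lam1 e1 K, ⟪e1, v⟫ = (0 : ℝ) := by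
    intro v hv
    exact Submodule.mem_orthogonal_singleton_iff_inner_right.mp (Submodule.mem_inf.mp hv).1
  have hK2 : ∀ v ∈ D2s lam1 e1 K, K e1 v = (lam1 / 2) • v := by
    intro v hv
    exact Module.End.mem_eigenspace_iff.mp (Submodule.mem_inf.mp hv).2
  have hperp3 : ∀ w ∈ D3s μ e1 K, ⟪e1, w⟫ = (0 : ℝ) := by
    intro w hw
    exact Submodule.mem_orthogonal_singleton_iff_inner_right.mp (Submodule.mem_inf.mp hw).1
  have hK3 : ∀ w ∈ D3s μ e1 K, K e1 w = μ • w := by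
    intro w hw
    exact Module.End.mem_eigenspace_iff.mp (Submodule.mem_inf.mp hw).2
  have hD23 : ∀ v ∈ D2s lam1 e1 K, ∀ w ∈ D3s μ e1 K, ⟪v, w⟫ = (0 : ℝ) := by
    intro v hv w hw
    have h1 := hKcub e1 v w
    rw [hK2 v hv, hK3 w hw, real_inner_smul_left, real_inner_smul_left,
      real_inner_comm w v] at h1
    have h2 : η * ⟪w, v⟫ = 0 := by rw [hμη] at h1; linarith
    rw [real_inner_comm]
    exact (mul_eq_zero.mp h2).resolve_left hηne
  have hKe1e1 : K e1 e1 = lam1 • e1 := by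
    have key : ∀ y : V, ⟪K e1 e1 - lam1 • e1, y⟫ = 0 := by
      intro y
      have hy : y ∈ (ℝ ∙ e1) ⊔ D2s lam1 e1 K ⊔ D3s μ e1 K := by rw [hsplit]; trivial
      obtain ⟨a, ha, c, hc, rfl⟩ := Submodule.mem_sup.mp hy
      obtain ⟨a1, ha1, b, hb, rfl⟩ := Submodule.mem_sup.mp ha
      obtain ⟨r, rfl⟩ := Submodule.mem_span_singleton.mp ha1
      have l1 : ⟪K e1 e1 - lam1 • e1, e1⟫ = 0 := by
        rw [inner_sub_left, real_inner_smul_left, he11, ← hlam1]; ring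
      have l2 : ⟪K e1 e1 - lam1 • e1, b⟫ = 0 := by
        rw [inner_sub_left, hKcub e1 e1 b, hK2 b hb, real_inner_smul_left,
          real_inner_smul_left, real_inner_comm e1 b, hperp2 b hb]
        ring
      have l3 : ⟪K e1 e1 - lam1 • e1, c⟫ = 0 := by
        rw [inner_sub_left, hKcub e1 e1 c, hK3 c hc, real_inner_smul_left,
          real_inner_smul_left, real_inner_comm e1 c, hperp3 c hc]
        ring
      rw [inner_add_right, inner_add_right, inner_smul_right, l2, l3, l1]
      simp
    have h0 := key (K e1 e1 - lam1 • e1)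
    rw [inner_self_eq_zero, sub_eq_zero] at h0
    exact h0
  -- bilinearity helpers
  have Ksmul2 : ∀ (c : ℝ) (x y : V), K x (c • y) = c • K x y := fun c x y => map_smul (K x) c y
  have Ksmul1 : ∀ (c : ℝ) (x y : V), K (c • x) y = c • K x y := by
    intro c x y; rw [map_smul]; rfl
  have Kadd2 : ∀ x y z : V, K x (y + z) = K x y + K x z := fun x y z => map_add (K x) y z
  have Kadd1 : ∀ x y z : V, K (x + y) z = K x z + K y z := by
    intro x y z; rw [map_add]; rfl
  have hLexp : ∀ v v' : V, K v v' = Lop lam1 e1 K v v' + (lam1 / 2 * ⟪v, v'⟫) • e1 := by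
    intro v v'; rw [Lop]; abel
  have hKe1K : ∀ v ∈ D2s lam1 e1 K, ∀ v' ∈ D2s lam1 e1 K,
      K e1 (K v v') = μ • K v v' + ((lam1 - μ) * (lam1 / 2) * ⟪v, v'⟫) • e1 := by
    intro v hv v' hv'
    have hL : K e1 (Lop lam1 e1 K v v') = μ • Lop lam1 e1 K v v' :=
      hK3 _ (hLD3 v hv v' hv')
    conv_lhs => rw [hLexp v v', Kadd2, Ksmul2, hL, hKe1e1]
    conv_rhs => rw [hLexp v v']
    match_scalars <;> ring
  -- curvature computations
  have hRc : ∀ X Y Z : V, Rc ε K X Y Z =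
      ε • (⟪Y, Z⟫ • X - ⟪X, Z⟫ • Y) - K X (K Y Z) + K Y (K X Z) := fun X Y Z => rfl
  have R1 : ∀ v ∈ D2s lam1 e1 K, Rc ε K e1 v e1 = (η ^ 2) • v := by
    intro v hv
    simp only [hRc, hKe1e1, Ksmul2, hKsymm v e1, hK2 v hv, he11, real_inner_comm e1 v,
      hperp2 v hv]
    match_scalars <;> (try simp only [hε2]) <;> ring
  have R2 : ∀ v ∈ D2s lam1 e1 K, ∀ v' ∈ D2s lam1 e1 K,
      Rc ε K e1 v v' = (-(η ^ 2) * ⟪v, v'⟫) • e1 + η • Lop lam1 e1 K v v' := by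
    intro v hv v' hv'
    rw [hRc, hKe1K v hv v' hv', hK2 v' hv', Ksmul2, Lop, hperp2 v' hv']
    match_scalars <;> (try simp only [hε2, hμη]) <;> ring
  have R3 : ∀ v ∈ D2s lam1 e1 K, ∀ w ∈ D3s μ e1 K,
      Rc ε K e1 v w = (-η) • K v w := by
    intro v hv w hw
    rw [hRc, hK3 w hw, Ksmul2, hK2 _ (hKD2 v hv w hw), hD23 v hv w hw, hperp3 w hw]
    match_scalars <;> (try simp only [hμη]) <;> ring
  have R4 : ∀ w ∈ D3s μ e1 K, Rc ε K e1 w e1 = 0 := by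
    intro w hw
    simp only [hRc, hKe1e1, Ksmul2, hKsymm w e1, hK3 w hw, he11, real_inner_comm e1 w,
      hperp3 w hw]
    match_scalars <;> (try simp only [hε2, hμη]) <;> ring
  have R5 : ∀ w ∈ D3s μ e1 K, ∀ v ∈ D2s lam1 e1 K, Rc ε K e1 w v = 0 := by
    intro w hw v hv
    simp only [hRc, hKsymm w v, hK2 _ (hKD2 v hv w hw), Ksmul2, hK2 v hv, hK3 w hw,
      real_inner_comm v w, hD23 v hv w hw, hperp2 v hv, hKsymm w v]
    match_scalars <;> ring
  have R6 : ∀ v ∈ D2s lam1 e1 K, ∀ w ∈ D3s μ e1 K, Rc ε K v w e1 = η • K v w := by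
    intro v hv w hw
    simp only [hRc, hKsymm w e1, hKsymm v e1, hK3 w hw, hK2 v hv, Ksmul2,
      real_inner_comm e1 w, real_inner_comm e1 v, hperp3 w hw, hperp2 v hv, hKsymm w v]
    match_scalars <;> (try simp only [hμη]) <;> ring
  have hRcadd : ∀ X Y a b : V, Rc ε K X Y (a + b) = Rc ε K X Y a + Rc ε K X Y b := by
    intro X Y a b
    simp only [hRc, inner_add_right, map_add]
    module
  have hRcsmul : ∀ (c : ℝ) (X Y a : V), Rc ε K X Y (c • a) = c • Rc ε K X Y a := by
    intro c X Y a
    simp only [hRc, real_inner_smul_right, map_smul]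
    module
  have hB : ∀ v ∈ D2s lam1 e1 K, ∀ v' ∈ D2s lam1 e1 K, ∀ w ∈ D3s μ e1 K,
      K e1 (K w (Lop lam1 e1 K v v')) =
        (ε * ⟪w, Lop lam1 e1 K v v'⟫) • e1 + μ • K w (Lop lam1 e1 K v v') := by
    intro v hv v' hv' w hw
    have hLm := hLD3 v hv v' hv'
    have h0 : Rc ε K e1 w (K v v') = 0 := by
      rw [hpar e1 w v v', R5 w hw v hv, R5 w hw v' hv', map_zero, map_zero]
      simp
    rw [hLexp v v', hRcadd, hRcsmul, R4 w hw, smul_zero, add_zero,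
      hRc, hK3 _ hLm, Ksmul2, hperp3 _ hLm] at h0
    linear_combination (norm := module) -h0
  have hA : ∀ v ∈ D2s lam1 e1 K, ∀ v' ∈ D2s lam1 e1 K, ∀ v'' ∈ D2s lam1 e1 K,
      K v (Lop lam1 e1 K v' v'') + K v' (Lop lam1 e1 K v v'') + K v'' (Lop lam1 e1 K v v') =
        (η * lam1 / 2) • (⟪v', v''⟫ • v + ⟪v, v'⟫ • v'' + ⟪v, v''⟫ • v') := by
    intro v hv v' hv' v'' hv''
    have h0 := hpar e1 v v' v''
    rw [hLexp v' v'', hRcadd, hRcsmul, R1 v hv, R3 v hv _ (hLD3 v' hv' v'' hv''),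
      R2 v hv v' hv', R2 v hv v'' hv''] at h0
    simp only [Kadd1, Kadd2, Ksmul1, Ksmul2] at h0
    rw [hK2 v'' hv'', hKsymm (Lop lam1 e1 K v v') v'', hKsymm v' e1, hK2 v' hv'] at h0
    apply smul_right_injective V hηne
    show η • _ = η • _
    linear_combination (norm := module) -h0
  have Ksub2 : ∀ x y z : V, K x (y - z) = K x y - K x z := fun x y z => map_sub (K x) y z
  have hE : ∀ v ∈ D2s lam1 e1 K, ∀ v' ∈ D2s lam1 e1 K, ∀ w ∈ D3s μ e1 K,
      K w (Lop lam1 e1 K v v') = K v' (K v w) + K v (K v' w) +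
        ((ε - lam1 * μ / 2) * ⟪v, v'⟫) • w +
        ((μ - lam1) * ⟪Lop lam1 e1 K v v', w⟫) • e1 := by
    intro v hv v' hv' w hw
    have hx' : K v' w ∈ D2s lam1 e1 K := hKD2 v' hv' w hw
    have hvx : ⟪v, K v' w⟫ = ⟪Lop lam1 e1 K v v', w⟫ := by
      rw [real_inner_comm (K v' w) v, hKcub v' w v, hKsymm v' v, hLexp v v',
        inner_add_left, real_inner_smul_left, hperp3 w hw]
      ring
    have h0 := hpar v w e1 v'
    rw [hK2 v' hv', hRcsmul, R6 v hv w hw, Ksmul1, hKsymm (K v w) v'] at h0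
    rw [hRc v w v'] at h0
    rw [real_inner_comm v' w, hD23 v' hv' w hw, hKsymm w v', hLexp v v'] at h0
    rw [Kadd2 w, Ksmul2, hKsymm w e1, hK3 w hw] at h0
    simp only [Kadd2, Ksub2, Ksmul2] at h0
    rw [hK2 v hv, hK3 w hw, hKe1K v hv (K v' w) hx', hB v hv v' hv' w hw, hvx,
      real_inner_comm (Lop lam1 e1 K v v') w] at h0
    simp only [hε2, hμη] at h0 ⊢
    apply smul_right_injective V hηne
    show η • _ = η • _
    linear_combination (norm := module) h0
  have hLsym : ∀ a b : V, Lop lam1 e1 K a b = Lop lam1 e1 K b a := by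
    intro a b; rw [Lop, Lop, hKsymm a b, real_inner_comm a b]
  intro j p hpj
  have hONij : ∀ i k : Fin (m - 1), ⟪u i, u k⟫ = if i = k then (1 : ℝ) else 0 :=
    orthonormal_iff_ite.mp huON
  have hjj : ⟪u j, u j⟫ = (1 : ℝ) := by rw [hONij]; simp
  have hjp : ⟪u j, u p⟫ = (0 : ℝ) := by simp [hONij, Ne.symm hpj]
  have hpj' : ⟪u p, u j⟫ = (0 : ℝ) := by simp [hONij, hpj]
  set w : V := Lop lam1 e1 K (u j) (u p) with hwdef
  have hwD3 : w ∈ D3s μ e1 K := hLD3 _ (huD2 j) _ (huD2 p)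
  have hLjjD3 : Lop lam1 e1 K (u j) (u j) ∈ D3s μ e1 K := hLD3 _ (huD2 j) _ (huD2 j)
  have hKwD2 : K (u j) w ∈ D2s lam1 e1 K := hKD2 _ (huD2 j) w hwD3
  have hwK : K (u j) (u p) = w := by rw [hwdef, Lop, hjp]; simp
  have hwK' : K (u p) (u j) = w := by rw [hKsymm (u p) (u j), hwK]
  have hA1 : K (u j) (Lop lam1 e1 K (u j) (u j)) = (η * lam1 / 2) • u j := by
    have h := hA (u j) (huD2 j) (u j) (huD2 j) (u j) (huD2 j)
    rw [hjj] at h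
    have h3 : (3 : ℝ) • K (u j) (Lop lam1 e1 K (u j) (u j)) =
        (3 : ℝ) • ((η * lam1 / 2) • u j) := by
      linear_combination (norm := module) h
    exact smul_right_injective V (by norm_num : (3:ℝ) ≠ 0) h3
  have hA2 : K (u p) (Lop lam1 e1 K (u j) (u j)) =
      (η * lam1 / 2) • u p - (2 : ℝ) • K (u j) w := by
    have h := hA (u p) (huD2 p) (u j) (huD2 j) (u j) (huD2 j)
    rw [hjj, hpj', hLsym (u p) (u j), ← hwdef] at h
    linear_combination (norm := module) h
  have hP1 := hE (u j) (huD2 j) (u j) (huD2 j) w hwD3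
  rw [hjj] at hP1
  have hP2 := hE (u j) (huD2 j) (u p) (huD2 p) (Lop lam1 e1 K (u j) (u j)) hLjjD3
  rw [hjp, ← hwdef, hA1, hA2, Ksmul2, Ksub2, Ksmul2, Ksmul2, hwK', hwK,
    real_inner_comm (Lop lam1 e1 K (u j) (u j)) w] at hP2
  rw [hKsymm w (Lop lam1 e1 K (u j) (u j))] at hP1
  have hcore : (4 : ℝ) • K (u j) (K (u j) w) = (η * (η + lam1 / 2)) • w := by
    have h12 := hP1.symm.trans hP2
    simp only [hε2, hμη] at h12
    linear_combination (norm := module) h12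
  have hperpLjj : ⟪Lop lam1 e1 K (u j) (u j), w⟫ = 0 := by
    have h := congrArg (fun t : V => ⟪t, e1⟫) hcore
    simp only [real_inner_smul_left] at h
    rw [hKcub (u j) (K (u j) w) e1, hKsymm (u j) e1, hK2 (u j) (huD2 j),
      real_inner_smul_left, real_inner_comm (K (u j) w) (u j), hKcub (u j) w (u j)] at h
    rw [hLexp (u j) (u j), inner_add_left, real_inner_smul_left, hperp3 w hwD3,
      real_inner_comm e1 w, hperp3 w hwD3] at h
    have h2 : lam1 * ⟪Lop lam1 e1 K (u j) (u j), w⟫ = 0 := by linear_combination h / 2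
    exact (mul_eq_zero.mp h2).resolve_left (ne_of_gt hlam1pos)
  have hinner_ui : ∀ i, ⟪u i, K (u j) w⟫ = ⟪Lop lam1 e1 K (u j) (u i), w⟫ := by
    intro i
    rw [real_inner_comm (K (u j) w) (u i), hKcub (u j) w (u i), hLexp (u j) (u i),
      inner_add_left, real_inner_smul_left, hperp3 w hwD3]
    ring
  have hxexp : K (u j) w = ∑ i, ⟪Lop lam1 e1 K (u j) (u i), w⟫ • u i := by
    have hyD2 : K (u j) w - ∑ i, ⟪Lop lam1 e1 K (u j) (u i), w⟫ • u i ∈ D2s lam1 e1 K :=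
      Submodule.sub_mem _ hKwD2
        (Submodule.sum_mem _ fun i _ => Submodule.smul_mem _ _ (huD2 i))
    have hyperp : ∀ k, ⟪u k, K (u j) w - ∑ i, ⟪Lop lam1 e1 K (u j) (u i), w⟫ • u i⟫ = 0 := by
      intro k
      rw [inner_sub_right, inner_sum]
      simp only [real_inner_smul_right, hONij, mul_ite, mul_one, mul_zero]
      rw [Finset.sum_ite_eq Finset.univ k fun i => ⟪Lop lam1 e1 K (u j) (u i), w⟫]
      simp only [Finset.mem_univ, if_true]
      rw [hinner_ui k]
      ring
    have hyorth : ∀ z ∈ D2s lam1 e1 K,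
        ⟪z, K (u j) w - ∑ i, ⟪Lop lam1 e1 K (u j) (u i), w⟫ • u i⟫ = 0 := by
      intro z hz
      rw [← huspan] at hz
      induction hz using Submodule.span_induction with
      | mem a ha => obtain ⟨i, rfl⟩ := ha; exact hyperp i
      | zero => simp
      | add a b _ _ ha hb => rw [inner_add_left, ha, hb]; ring
      | smul c a _ ha => rw [real_inner_smul_left, ha]; ring
    have hy0 : K (u j) w - ∑ i, ⟪Lop lam1 e1 K (u j) (u i), w⟫ • u i = 0 := by
      rw [← inner_self_eq_zero (𝕜 := ℝ)]
      exact hyorth _ hyD2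
    exact sub_eq_zero.mp hy0
  have hKx : K (u j) (K (u j) w) = ∑ i, ⟪Lop lam1 e1 K (u j) (u i), w⟫ • K (u j) (u i) := by
    conv_lhs => rw [hxexp]
    rw [map_sum]
    exact Finset.sum_congr rfl fun i _ => Ksmul2 _ _ _
  have hsum : ∑ i, (4 * ⟪Lop lam1 e1 K (u j) (u i), w⟫) • Lop lam1 e1 K (u i) (u j) =
      (η * (η + lam1 / 2)) • w := by
    have hterm : ∀ i : Fin (m - 1),
        (4 * ⟪Lop lam1 e1 K (u j) (u i), w⟫) • Lop lam1 e1 K (u i) (u j) =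
          (4 : ℝ) • (⟪Lop lam1 e1 K (u j) (u i), w⟫ • K (u j) (u i)) -
            (4 * ⟪Lop lam1 e1 K (u j) (u i), w⟫ * (lam1 / 2) * ⟪u j, u i⟫) • e1 := by
      intro i
      rw [hLsym (u i) (u j), Lop]
      match_scalars <;> ring
    rw [Finset.sum_congr rfl fun i _ => hterm i, Finset.sum_sub_distrib, ← Finset.smul_sum,
      ← Finset.sum_smul]
    have hzero : (∑ i, 4 * ⟪Lop lam1 e1 K (u j) (u i), w⟫ * (lam1 / 2) * ⟪u j, u i⟫) = 0 := by
      rw [Finset.sum_eq_single j]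
      · rw [hjj, hperpLjj]; ring
      · intro b _ hb
        rw [hONij j b, if_neg fun hh => hb hh.symm]
        ring
      · intro hj; exact absurd (Finset.mem_univ j) hj
    rw [hzero, zero_smul, sub_zero, ← hKx]
    exact hcore
  have hmain : (0 : V) =
      (η * (η + lam1 / 2) - 4 * ⟪w, w⟫) • w -
        ∑ i ∈ Finset.univ.erase p, (4 * ⟪Lop lam1 e1 K (u j) (u i), w⟫) •
          Lop lam1 e1 K (u i) (u j) := by
    rw [Finset.sum_erase_eq_sub (Finset.mem_univ p), hsum, hLsym (u p) (u j), ← hwdef]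
    module
  refine ⟨hmain, ?_⟩
  intro hne hperp
  have hs : ∑ i ∈ Finset.univ.erase p, (4 * ⟪Lop lam1 e1 K (u j) (u i), w⟫) •
      Lop lam1 e1 K (u i) (u j) = 0 := by
    refine Finset.sum_eq_zero fun i hi => ?_
    rw [hperp i (Finset.ne_of_mem_erase hi), mul_zero, zero_smul]
  rw [hs, sub_zero] at hmain
  rcases smul_eq_zero.mp hmain.symm with h | h
  · rw [hτ]; linarith
  · exact absurd h hne









end
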